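/- Let Λ and Ω be distinct superpartitions of the same degree (n|m) that are comparable in the dominance order. Then the pairs of eigenvalue polynomials differ: either α·n((Λ*)') - n(Λ*) ≠ α·n((Ω*)') - n(Ω*) as polynomials in α, or α·|Λ^a| - |(Λ')^a| ≠ α·|Ω^a| - |(Ω')^a| as polynomials in α. -/

import Mathlib

/-- A function `ℕ → ℕ` represents a partition: non-increasing and eventually zero. -/
def IsPartitionFn (f : ℕ → ℕ) : Prop :=
  (∀ ⦃i j : ℕ⦄, i ≤ j → f j ≤ f i) ∧ ∃ N, ∀ i, N ≤ i → f i = 0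

/-- A superpartition of fermionic degree `m`: a strictly decreasing sequence `a` of
`m` nonnegative integers together with an ordinary partition `s` (a non-increasing
list of positive integers). -/
structure SuperPartition (m : ℕ) where
  a : Fin m → ℕ
  a_strictAnti : ∀ ⦃i j : Fin m⦄, i < j → a j < a i
  s : List ℕ
  s_sorted : s.Pairwise (· ≥ ·)
  s_pos : ∀ x ∈ s, 0 < x

/-- Sort a finite multiset of naturals into the non-increasing function it defines. -/
def sortFn (ms : Multiset ℕ) : ℕ → ℕ := fun i => (ms.sort (· ≥ ·)).getD i 0

/-- `Λ* = sort(Λᵃ ∪ Λˢ)`. -/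
def SuperPartition.starFn {m : ℕ} (Λ : SuperPartition m) : ℕ → ℕ :=
  sortFn ((List.ofFn Λ.a : Multiset ℕ) + (Λ.s : Multiset ℕ))

/-- `Λ^⊛ = sort((Λᵃ + 1ᵐ) ∪ Λˢ)`. -/
def SuperPartition.circFn {m : ℕ} (Λ : SuperPartition m) : ℕ → ℕ :=
  sortFn ((List.ofFn (fun i => Λ.a i + 1) : Multiset ℕ) + (Λ.s : Multiset ℕ))

/-- The bosonic degree `|Λ|` of a superpartition. -/
def SuperPartition.deg {m : ℕ} (Λ : SuperPartition m) : ℕ :=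
  (∑ i, Λ.a i) + Λ.s.sum

/-- `f` dominates `g`: all partial sums of `f` are at least those of `g`. -/
def Dominates (f g : ℕ → ℕ) : Prop :=
  ∀ k, ∑ i ∈ Finset.range k, g i ≤ ∑ i ∈ Finset.range k, f i

/-- Dominance order on superpartitions: `Λ ≥ Ω` iff they have the same degrees and
`Λ* ≥ Ω*`, `Λ^⊛ ≥ Ω^⊛` in dominance order. -/
def SuperDom {m : ℕ} (Λ Ω : SuperPartition m) : Prop :=
  Λ.deg = Ω.deg ∧ Dominates Λ.starFn Ω.starFn ∧ Dominates Λ.circFn Ω.circFn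

/-- The conjugate (transpose) of a partition function. -/
noncomputable def conjFn (f : ℕ → ℕ) : ℕ → ℕ := fun i => Set.ncard {j : ℕ | i < f j}

/-- `n(ν) = Σ_i (i-1) ν_i` (0-indexed). -/
noncomputable def nStat (f : ℕ → ℕ) : ℕ := ∑ᶠ i, i * f i

/-- The sum of the fermionic parts of the superpartition with description
`(lam, mu) = (Λ*, Λ^⊛)`: the sum of `lam i` over the fermionic rows `i`. -/
noncomputable def fermSum (lam mu : ℕ → ℕ) : ℕ := ∑ᶠ i, (mu i - lam i) * lam i


open Finset

section Helpers

lemma sum_range_getD (g : ℕ → ℕ) (hg : g 0 = 0) :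
    ∀ (L : List ℕ) (N : ℕ), L.length ≤ N →
      ∑ i ∈ Finset.range N, g (L.getD i 0) = (L.map g).sum := by
  intro L
  induction L with
  | nil => intro N _; simp [hg]
  | cons x L ih =>
    intro N hN
    obtain ⟨N', rfl⟩ : ∃ N', N = N' + 1 := ⟨N - 1, by simp at hN; omega⟩
    rw [Finset.sum_range_succ']
    simp only [List.getD_cons_succ, List.getD_cons_zero]
    rw [ih N' (by simp at hN; omega)]
    simp [add_comm]

lemma sortFn_map_sum (g : ℕ → ℕ) (hg : g 0 = 0) (ms : Multiset ℕ) (N : ℕ)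
    (h : Multiset.card ms ≤ N) :
    ∑ i ∈ Finset.range N, g (sortFn ms i) = (ms.map g).sum := by
  unfold sortFn
  rw [sum_range_getD g hg _ N (by rwa [Multiset.length_sort])]
  conv_rhs => rw [← Multiset.sort_eq (r := (· ≥ ·)) (s := ms)]
  rw [Multiset.map_coe, Multiset.sum_coe]

lemma sortFn_eq_zero (ms : Multiset ℕ) {i : ℕ} (h : Multiset.card ms ≤ i) :
    sortFn ms i = 0 := by
  unfold sortFn
  exact List.getD_eq_default _ _ (by rwa [Multiset.length_sort])

lemma sortFn_anti (ms : Multiset ℕ) {i j : ℕ} (h : i ≤ j) :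
    sortFn ms j ≤ sortFn ms i := by
  rcases eq_or_lt_of_le h with rfl | hij
  · exact le_refl _
  unfold sortFn
  set L := ms.sort (· ≥ ·) with hL
  by_cases hj : j < L.length
  · have hi : i < L.length := lt_trans hij hj
    rw [List.getD_eq_getElem L 0 hj, List.getD_eq_getElem L 0 hi]
    have hs : L.Pairwise (· ≥ ·) := Multiset.pairwise_sort ms _
    exact List.pairwise_iff_getElem.mp hs i j hi hj hij
  · rw [List.getD_eq_default L 0 (by omega)]
    exact Nat.zero_le _

end Helpers
section NStat

lemma nStat_eq_sum (f : ℕ → ℕ) (N : ℕ) (h : ∀ i, N ≤ i → f i = 0) :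
    nStat f = ∑ i ∈ Finset.range N, i * f i := by
  unfold nStat
  apply finsum_eq_finset_sum_of_support_subset
  intro x hx
  simp only [Function.mem_support] at hx
  simp only [Finset.coe_range, Set.mem_Iio]
  by_contra hc
  exact hx (by rw [h x (le_of_not_gt hc), mul_zero])

lemma swap_sum (f : ℕ → ℕ) (N : ℕ) :
    ∑ k ∈ Finset.range N, ∑ i ∈ Finset.range (k+1), f i
      = ∑ i ∈ Finset.range N, (N - i) * f i := by
  have h1 : ∀ k ∈ Finset.range N, ∑ i ∈ Finset.range (k+1), f i
      = ∑ i ∈ Finset.range N, if i ≤ k then f i else 0 := by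
    intro k hk
    simp only [Finset.mem_range] at hk
    rw [← Finset.sum_filter]
    apply Finset.sum_congr
    · ext i
      simp only [Finset.mem_filter, Finset.mem_range]
      omega
    · intros; rfl
  rw [Finset.sum_congr rfl h1, Finset.sum_comm]
  apply Finset.sum_congr rfl
  intro i hi
  rw [← Finset.sum_filter]
  have h2 : (Finset.range N).filter (fun k => i ≤ k) = Finset.Ico i N := by
    ext k
    simp only [Finset.mem_filter, Finset.mem_range, Finset.mem_Ico]
    omega
  rw [h2, Finset.sum_const, Nat.card_Ico, smul_eq_mul]

lemma nStat_add_eq (f : ℕ → ℕ) (N : ℕ) (h : ∀ i, N ≤ i → f i = 0) :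
    nStat f + ∑ k ∈ Finset.range N, ∑ i ∈ Finset.range (k+1), f i
      = N * ∑ i ∈ Finset.range N, f i := by
  rw [nStat_eq_sum f N h, swap_sum, ← Finset.sum_add_distrib, Finset.mul_sum]
  apply Finset.sum_congr rfl
  intro i hi
  simp only [Finset.mem_range] at hi
  rw [← add_mul, Nat.add_sub_cancel' (le_of_lt hi)]

lemma nStat_ne (f g : ℕ → ℕ) (N : ℕ)
    (hf : ∀ i, N ≤ i → f i = 0) (hg : ∀ i, N ≤ i → g i = 0)
    (hsum : ∑ i ∈ Finset.range N, f i = ∑ i ∈ Finset.range N, g i)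
    (hdom : Dominates f g) (hne : f ≠ g) : nStat f ≠ nStat g := by
  intro heq
  have h1 := nStat_add_eq f N hf
  have h2 := nStat_add_eq g N hg
  rw [heq, hsum] at h1
  have h3 : ∑ k ∈ Finset.range N, ∑ i ∈ Finset.range (k+1), g i
      = ∑ k ∈ Finset.range N, ∑ i ∈ Finset.range (k+1), f i := by omega
  have h4 := (Finset.sum_eq_sum_iff_of_le (fun k _ => hdom (k+1))).mp h3
  apply hne
  funext i
  by_cases hi : i < N
  · have hFsi := h4 i (Finset.mem_range.mpr hi)
    have hFi : ∑ j ∈ Finset.range i, g j = ∑ j ∈ Finset.range i, f j := by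
      rcases Nat.eq_zero_or_pos i with rfl | hpos
      · simp
      · obtain ⟨i', rfl⟩ : ∃ i', i = i' + 1 := ⟨i - 1, by omega⟩
        exact h4 i' (Finset.mem_range.mpr (by omega))
    rw [Finset.sum_range_succ, Finset.sum_range_succ, hFi] at hFsi
    omega
  · rw [hf i (by omega), hg i (by omega)]

end NStat

section UDom

lemma filter_range_eq_range (N : ℕ) (p : ℕ → Prop) [DecidablePred p]
    (hdc : ∀ i j, i ≤ j → p j → p i) :
    (Finset.range N).filter p = Finset.range (((Finset.range N).filter p).card) := by
  ext i
  simp only [Finset.mem_filter, Finset.mem_range]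
  constructor
  · rintro ⟨hiN, hpi⟩
    have hsub : Finset.range (i+1) ⊆ (Finset.range N).filter p := by
      intro k hk
      simp only [Finset.mem_range] at hk
      exact Finset.mem_filter.mpr ⟨Finset.mem_range.mpr (by omega), hdc k i (by omega) hpi⟩
    have := Finset.card_le_card hsub
    simp only [Finset.card_range] at this
    omega
  · intro hic
    have hcN : ((Finset.range N).filter p).card ≤ N := by
      have := Finset.card_le_card (Finset.filter_subset p (Finset.range N))
      simpa using this
    by_cases hpi : p i
    · exact ⟨by omega, hpi⟩
    · exfalso
      have hsub : (Finset.range N).filter p ⊆ Finset.range i := by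
        intro k hk
        simp only [Finset.mem_filter, Finset.mem_range] at hk
        simp only [Finset.mem_range]
        by_contra hki
        exact hpi (hdc i k (by omega) hk.2)
      have := Finset.card_le_card hsub
      simp only [Finset.card_range] at this
      omega

lemma udom (f g : ℕ → ℕ) (N K : ℕ)
    (hg_anti : ∀ i j : ℕ, i ≤ j → g j ≤ g i)
    (hdom : Dominates f g) :
    ∑ i ∈ Finset.range N, (g i - K) ≤ ∑ i ∈ Finset.range N, (f i - K) := by
  set S := (Finset.range N).filter (fun i => K < g i) with hS
  set c := S.card with hc
  have hrange : S = Finset.range c :=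
    filter_range_eq_range N _ (fun i j hij hpj => lt_of_lt_of_le hpj (hg_anti i j hij))
  have hcN : c ≤ N := by
    have := Finset.card_le_card (Finset.filter_subset (fun i => K < g i) (Finset.range N))
    simpa using this
  have hL : ∑ i ∈ Finset.range N, (g i - K) = ∑ i ∈ Finset.range c, (g i - K) := by
    rw [← hrange, hS]
    symm
    apply Finset.sum_subset (Finset.filter_subset _ _)
    intro x hx hxn
    simp only [Finset.mem_filter, Finset.mem_range] at hxn
    simp only [Finset.mem_range] at hx
    have : ¬ K < g x := fun h => hxn ⟨hx, h⟩
    omega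
  have hKg : ∀ i ∈ Finset.range c, K ≤ g i := by
    intro i hi
    have : i ∈ S := by rw [hrange]; exact hi
    simp only [hS, Finset.mem_filter] at this
    omega
  have hcK : ∀ (h : ℕ → ℕ), ∑ i ∈ Finset.range c, (h i - K) + c * K
      = ∑ i ∈ Finset.range c, ((h i - K) + K) := by
    intro h
    rw [Finset.sum_add_distrib, Finset.sum_const, Finset.card_range, smul_eq_mul]
  have e1 : ∑ i ∈ Finset.range c, (g i - K) + c * K = ∑ i ∈ Finset.range c, g i := by
    rw [hcK]
    apply Finset.sum_congr rfl
    intro i hi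
    have := hKg i hi
    omega
  have e2 : ∑ i ∈ Finset.range c, f i ≤ ∑ i ∈ Finset.range c, (f i - K) + c * K := by
    rw [hcK]
    apply Finset.sum_le_sum
    intro i _
    omega
  have e3 := hdom c
  have e4 : ∑ i ∈ Finset.range c, (f i - K) ≤ ∑ i ∈ Finset.range N, (f i - K) :=
    Finset.sum_le_sum_of_subset (Finset.range_subset_range.mpr hcN)
  omega

end UDom
section Cnt

variable {m : ℕ}

/-- number of fermionic parts ≥ K -/
def cnt (a : Fin m → ℕ) (K : ℕ) : ℕ := (Finset.univ.filter (fun j => K ≤ a j)).card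

lemma cnt_iff (a : Fin m → ℕ) (ha : ∀ ⦃i j : Fin m⦄, i < j → a j < a i)
    (K : ℕ) (j : Fin m) : K ≤ a j ↔ (j : ℕ) < cnt a K := by
  constructor
  · intro hK
    have hsub : Finset.Iic j ⊆ Finset.univ.filter (fun i => K ≤ a i) := by
      intro i hi
      simp only [Finset.mem_Iic] at hi
      rcases eq_or_lt_of_le hi with rfl | hlt
      · simp [hK]
      · have := ha hlt
        simp only [Finset.mem_filter, Finset.mem_univ, true_and]
        omega
    have := Finset.card_le_card hsub
    rw [Fin.card_Iic] at this
    unfold cnt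
    omega
  · intro hc
    by_contra hK
    have hsub : Finset.univ.filter (fun i => K ≤ a i) ⊆ Finset.Iio j := by
      intro i hi
      simp only [Finset.mem_filter, Finset.mem_univ, true_and] at hi
      simp only [Finset.mem_Iio]
      by_contra hij
      have hji : j ≤ i := le_of_not_gt hij
      rcases eq_or_lt_of_le hji with rfl | hlt
      · exact hK hi
      · have := ha hlt
        omega
    have := Finset.card_le_card hsub
    rw [Fin.card_Iio] at this
    unfold cnt at hc
    omega

lemma cnt_sum (a : Fin m → ℕ) (N : ℕ) (hN : ∀ j, a j ≤ N) :
    ∑ K ∈ Finset.range N, cnt a (K + 1) = ∑ j, a j := by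
  unfold cnt
  have h1 : ∀ K, (Finset.univ.filter (fun j => K + 1 ≤ a j)).card
      = ∑ j : Fin m, if K + 1 ≤ a j then 1 else 0 := fun K => Finset.card_filter _ _
  simp only [h1]
  rw [Finset.sum_comm]
  apply Finset.sum_congr rfl
  intro j _
  rw [← Finset.sum_filter]
  have h2 : (Finset.range N).filter (fun K => K + 1 ≤ a j) = Finset.range (a j) := by
    ext K
    simp only [Finset.mem_filter, Finset.mem_range]
    have := hN j
    omega
  rw [h2, Finset.sum_const, Finset.card_range, smul_eq_mul, mul_one]

end Cnt

section StarCirc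

variable {m : ℕ}

lemma star_card (Λ : SuperPartition m) :
    Multiset.card ((List.ofFn Λ.a : Multiset ℕ) + (Λ.s : Multiset ℕ)) = m + Λ.s.length := by
  simp

lemma circ_card (Λ : SuperPartition m) :
    Multiset.card ((List.ofFn (fun i => Λ.a i + 1) : Multiset ℕ) + (Λ.s : Multiset ℕ))
      = m + Λ.s.length := by
  simp

lemma starFn_sum (Λ : SuperPartition m) (N : ℕ) (hN : m + Λ.s.length ≤ N) :
    ∑ i ∈ Finset.range N, Λ.starFn i = Λ.deg := by
  unfold SuperPartition.starFn SuperPartition.deg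
  have h0 := sortFn_map_sum id rfl ((List.ofFn Λ.a : Multiset ℕ) + (Λ.s : Multiset ℕ)) N
    (by rw [star_card]; exact hN)
  simp only [id] at h0
  rw [h0]
  simp [List.sum_ofFn]

lemma starFn_zero (Λ : SuperPartition m) {i : ℕ} (hi : m + Λ.s.length ≤ i) :
    Λ.starFn i = 0 :=
  sortFn_eq_zero _ (by rw [star_card]; exact hi)

lemma circ_star_cnt (Λ : SuperPartition m) (N K : ℕ) (hN : m + Λ.s.length ≤ N) :
    ∑ i ∈ Finset.range N, (Λ.circFn i - K)
      = ∑ i ∈ Finset.range N, (Λ.starFn i - K) + cnt Λ.a K := by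
  unfold SuperPartition.circFn SuperPartition.starFn
  rw [sortFn_map_sum (fun x => x - K) (by simp) _ N (by rw [circ_card]; exact hN),
      sortFn_map_sum (fun x => x - K) (by simp) _ N (by rw [star_card]; exact hN)]
  simp only [Multiset.map_add, Multiset.sum_add, Multiset.map_coe, Multiset.sum_coe,
    List.map_ofFn]
  have h1 : (List.ofFn ((fun x => x - K) ∘ fun i => Λ.a i + 1)).sum
      = (List.ofFn ((fun x => x - K) ∘ Λ.a)).sum + cnt Λ.a K := by
    rw [List.sum_ofFn, List.sum_ofFn]
    unfold cnt
    rw [Finset.card_filter, ← Finset.sum_add_distrib]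
    apply Finset.sum_congr rfl
    intro j _
    simp only [Function.comp_apply]
    split_ifs with h
    · omega
    · omega
  omega

end StarCirc

section CountMs

lemma sum_map_indicator (x : ℕ) (ms : Multiset ℕ) :
    (ms.map (fun y => if y = x then 1 else 0)).sum = ms.count x := by
  induction ms using Multiset.induction with
  | empty => simp
  | cons y ms ih =>
    simp only [Multiset.map_cons, Multiset.sum_cons, Multiset.count_cons, ih]
    split_ifs with h1 h2 h2 <;> omega

lemma count_eq_of_sortFn_eq {ms nt : Multiset ℕ} (h : sortFn ms = sortFn nt)
    {x : ℕ} (hx : x ≠ 0) : ms.count x = nt.count x := by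
  set N := Multiset.card ms + Multiset.card nt with hNdef
  have h1 := sortFn_map_sum (fun y => if y = x then 1 else 0) (by simp [Ne.symm hx]) ms N
    (by omega)
  have h2 := sortFn_map_sum (fun y => if y = x then 1 else 0) (by simp [Ne.symm hx]) nt N
    (by omega)
  rw [← sum_map_indicator x ms, ← sum_map_indicator x nt, ← h1, ← h2, h]

end CountMs

section Poly

open Polynomial in
lemma poly_pair {a b c d : ℚ} (h : X * C a - C b = X * C c - C d) : a = c ∧ b = d := by
  constructor
  · have := congrArg (fun p => Polynomial.coeff p 1) h
    simpa using this
  · have := congrArg (fun p => Polynomial.coeff p 0) h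
    simpa using this

end Poly
lemma SuperPartition.ext' {m : ℕ} {Λ Ω : SuperPartition m}
    (ha : Λ.a = Ω.a) (hs : Λ.s = Ω.s) : Λ = Ω := by
  cases Λ; cases Ω; simp_all

open Polynomial in
/-- two distinct superpartitions of the same degree that are comparable
in dominance order have distinct pairs of eigenvalue polynomials
`ε_Λ(α) = α n((Λ*)') - n(Λ*)` and `ε̃_Λ(α) = α |Λᵃ| - |(Λ')ᵃ|`. -/
theorem stmt10 {m : ℕ} (Λ Ω : SuperPartition m)
    (hdeg : Λ.deg = Ω.deg) (hne : Λ ≠ Ω)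
    (hcomp : SuperDom Λ Ω ∨ SuperDom Ω Λ) :
    (X * C ((nStat (conjFn Λ.starFn) : ℚ)) - C ((nStat Λ.starFn : ℚ))
      ≠ X * C ((nStat (conjFn Ω.starFn) : ℚ)) - C ((nStat Ω.starFn : ℚ))) ∨
    (X * C (((∑ i, Λ.a i : ℕ) : ℚ))
        - C ((fermSum (conjFn Λ.starFn) (conjFn Λ.circFn) : ℚ))
      ≠ X * C (((∑ i, Ω.a i : ℕ) : ℚ))
        - C ((fermSum (conjFn Ω.starFn) (conjFn Ω.circFn) : ℚ))) := by
  by_contra hcon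
  push_neg at hcon
  obtain ⟨h1, h2⟩ := hcon
  have e1 := poly_pair h1
  have e2 := poly_pair h2
  have hNst : nStat Λ.starFn = nStat Ω.starFn := Nat.cast_inj.mp e1.2
  have hA : (∑ i, Λ.a i) = ∑ i, Ω.a i := Nat.cast_inj.mp e2.1
  set N := m + Λ.s.length + Ω.s.length + Λ.deg + Ω.deg + 1 with hNdef
  have hNL : m + Λ.s.length ≤ N := by omega
  have hNO : m + Ω.s.length ≤ N := by omega
  have haLN : ∀ j, Λ.a j ≤ Λ.deg := by
    intro j
    have : Λ.a j ≤ ∑ i, Λ.a i :=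
      Finset.single_le_sum (fun i _ => Nat.zero_le _) (Finset.mem_univ j)
    unfold SuperPartition.deg
    omega
  have haON : ∀ j, Ω.a j ≤ Ω.deg := by
    intro j
    have : Ω.a j ≤ ∑ i, Ω.a i :=
      Finset.single_le_sum (fun i _ => Nat.zero_le _) (Finset.mem_univ j)
    unfold SuperPartition.deg
    omega
  by_cases hstar : Λ.starFn = Ω.starFn
  · -- star functions equal: derive Λ = Ω, contradiction
    -- cnt pointwise comparable
    have hcnt : (∀ K, cnt Ω.a K ≤ cnt Λ.a K) ∨ (∀ K, cnt Λ.a K ≤ cnt Ω.a K) := by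
      rcases hcomp with hc | hc
      · left
        intro K
        have hu := udom Λ.circFn Ω.circFn N K (fun i j hij => sortFn_anti _ hij) hc.2.2
        rw [circ_star_cnt Λ N K hNL, circ_star_cnt Ω N K hNO, hstar] at hu
        omega
      · right
        intro K
        have hu := udom Ω.circFn Λ.circFn N K (fun i j hij => sortFn_anti _ hij) hc.2.2
        rw [circ_star_cnt Λ N K hNL, circ_star_cnt Ω N K hNO, hstar] at hu
        omega
    have hsumL := cnt_sum Λ.a N (fun j => by have := haLN j; omega)
    have hsumO := cnt_sum Ω.a N (fun j => by have := haON j; omega)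
    have hKeq : ∀ K ∈ Finset.range N, cnt Λ.a (K + 1) = cnt Ω.a (K + 1) := by
      rcases hcnt with hc | hc
      · intro K hK
        exact ((Finset.sum_eq_sum_iff_of_le (fun K _ => hc (K + 1))).mp
          (by rw [hsumL, hsumO, hA]) K hK).symm
      · intro K hK
        exact (Finset.sum_eq_sum_iff_of_le (fun K _ => hc (K + 1))).mp
          (by rw [hsumL, hsumO, hA]) K hK
    have key : ∀ (j : Fin m) (K : ℕ), 1 ≤ K → K ≤ N → (K ≤ Λ.a j ↔ K ≤ Ω.a j) := by
      intro j K hK1 hKN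
      obtain ⟨K', rfl⟩ : ∃ K', K = K' + 1 := ⟨K - 1, by omega⟩
      rw [cnt_iff Λ.a Λ.a_strictAnti, cnt_iff Ω.a Ω.a_strictAnti,
        hKeq K' (Finset.mem_range.mpr (by omega))]
    have haeq : Λ.a = Ω.a := by
      funext j
      have c1 : Λ.a j ≤ Ω.a j := by
        rcases Nat.eq_zero_or_pos (Λ.a j) with h0 | h0
        · omega
        · exact (key j (Λ.a j) h0 (by have := haLN j; omega)).mp le_rfl
      have c2 : Ω.a j ≤ Λ.a j := by
        rcases Nat.eq_zero_or_pos (Ω.a j) with h0 | h0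
        · omega
        · exact (key j (Ω.a j) h0 (by have := haON j; omega)).mpr le_rfl
      omega
    -- star multisets equal
    have hms : (List.ofFn Λ.a : Multiset ℕ) + (Λ.s : Multiset ℕ)
        = (List.ofFn Ω.a : Multiset ℕ) + (Ω.s : Multiset ℕ) := by
      apply Multiset.ext.mpr
      intro x
      by_cases hx : x = 0
      · subst hx
        rw [Multiset.count_add, Multiset.count_add, haeq]
        have hzL : Multiset.count 0 (Λ.s : Multiset ℕ) = 0 := by
          rw [Multiset.coe_count]
          exact List.count_eq_zero.mpr (fun h => absurd (Λ.s_pos 0 h) (lt_irrefl 0))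
        have hzO : Multiset.count 0 (Ω.s : Multiset ℕ) = 0 := by
          rw [Multiset.coe_count]
          exact List.count_eq_zero.mpr (fun h => absurd (Ω.s_pos 0 h) (lt_irrefl 0))
        rw [hzL, hzO]
      · exact count_eq_of_sortFn_eq hstar hx
    rw [haeq] at hms
    have hsms : (Λ.s : Multiset ℕ) = (Ω.s : Multiset ℕ) := by
      exact add_left_cancel hms
    have hslist : Λ.s = Ω.s := by
      haveI : IsAntisymm ℕ (· ≥ ·) := ⟨fun a b h1 h2 => le_antisymm h2 h1⟩
      exact List.Perm.eq_of_pairwise (fun a b _ _ h1 h2 => le_antisymm h2 h1) Λ.s_sorted Ω.s_sorted (Multiset.coe_eq_coe.mp hsms)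
    exact hne (SuperPartition.ext' haeq hslist)
  · -- star functions differ: nStat differs, contradiction
    have hfz : ∀ i, N ≤ i → Λ.starFn i = 0 := fun i hi => starFn_zero Λ (by omega)
    have hgz : ∀ i, N ≤ i → Ω.starFn i = 0 := fun i hi => starFn_zero Ω (by omega)
    have hsum : ∑ i ∈ Finset.range N, Λ.starFn i = ∑ i ∈ Finset.range N, Ω.starFn i := by
      rw [starFn_sum Λ N hNL, starFn_sum Ω N hNO, hdeg]
    rcases hcomp with hc | hc
    · exact nStat_ne _ _ N hfz hgz hsum hc.2.1 hstar hNst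
    · exact nStat_ne _ _ N hgz hfz hsum.symm hc.2.1 (Ne.symm hstar) hNst.symm
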